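/- arXiv:1904.08823 — 4 statements merged into one kernel-verified Lean document; each statement's English description precedes it below -/
import Mathlib

section
/- In the bi-objective case (k = 2), for p points s^(1),…,s^(p) with f₁(s^(1)) ≤ … ≤ f₁(s^(p)), f₂(s^(1)) ≥ … ≥ f₂(s^(p)), and all points strictly dominating the reference point r, the hypervolume satisfies HV_r({s^(1),…,s^(p)}) = Σ_{i=1}^{p} (f₁(s^(i+1)) − f₁(s^(i)))·(r₂ − f₂(s^(i))), where f₁(s^(p+1)) := r₁. -/
open MeasureTheory Set

noncomputable def hv {n k : ℕ} (f : (Fin n → ℝ) → Fin k → ℝ) (r : Fin k → ℝ)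
    (S : Set (Fin n → ℝ)) : ℝ :=
  (MeasureTheory.volume {z : Fin k → ℝ | ∃ y ∈ S, ∀ j, f y j < z j ∧ z j < r j}).toReal

/-- Bi-objective hypervolume of a sorted chain of mutually non-dominated points
equals the sum of the areas of the axis-parallel rectangles. -/
theorem hv_biobjective_sum {n p : ℕ} (f : (Fin n → ℝ) → Fin 2 → ℝ) (r : Fin 2 → ℝ)
    (s : Fin p → (Fin n → ℝ))
    (h1 : ∀ i j : Fin p, i ≤ j → f (s i) 0 ≤ f (s j) 0)
    (h2 : ∀ i j : Fin p, i ≤ j → f (s j) 1 ≤ f (s i) 1)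
    (hr : ∀ i : Fin p, ∀ j, f (s i) j < r j) :
    hv f r (Set.range s) =
      ∑ i : Fin p,
        ((if h : (i : ℕ) + 1 < p then f (s ⟨(i : ℕ) + 1, h⟩) 0 else r 0) - f (s i) 0) *
          (r 1 - f (s i) 1) := by
  classical
  -- abbreviations
  let a : Fin p → ℝ := fun i => f (s i) 0
  let b : Fin p → ℝ := fun i => f (s i) 1
  let g : Fin p → ℝ := fun i => if h : (i : ℕ) + 1 < p then a ⟨(i : ℕ) + 1, h⟩ else r 0
  have hga : ∀ i, a i ≤ g i := by
    intro i
    by_cases h : (i : ℕ) + 1 < p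
    · simp only [g, dif_pos h]
      exact h1 i ⟨(i : ℕ) + 1, h⟩ (by simp [Fin.le_def])
    · simp only [g, dif_neg h]
      exact (hr i 0).le
  have hgr : ∀ i, g i ≤ r 0 := by
    intro i
    by_cases h : (i : ℕ) + 1 < p
    · simp only [g, dif_pos h]; exact (hr _ 0).le
    · simp only [g, dif_neg h]; exact le_refl _
  have hbr : ∀ i, b i < r 1 := fun i => hr i 1
  let B : Fin p → Set (Fin 2 → ℝ) :=
    fun i => Set.univ.pi ![Ioo (a i) (g i), Ioo (b i) (r 1)]
  let L : Fin p → Set (Fin 2 → ℝ) :=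
    fun i => Set.univ.pi ![({a i} : Set ℝ), Set.univ]
  have memB : ∀ i z, z ∈ B i ↔ (a i < z 0 ∧ z 0 < g i) ∧ (b i < z 1 ∧ z 1 < r 1) := by
    intro i z
    simp [B, Set.mem_univ_pi, Fin.forall_fin_two, and_assoc]
  have memL : ∀ i z, z ∈ L i ↔ z 0 = a i := by
    intro i z
    simp [L, Set.mem_univ_pi, Fin.forall_fin_two]
  have hmeas : ∀ i, MeasurableSet (B i) := by
    intro i
    apply MeasurableSet.univ_pi
    intro j
    fin_cases j <;> simp
  have hLnull : ∀ i, volume (L i) = 0 := by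
    intro i
    show volume (Set.univ.pi ![({a i} : Set ℝ), Set.univ]) = 0
    rw [volume_pi_pi]
    simp [Fin.prod_univ_two]
  have volB : ∀ i, volume (B i)
      = ENNReal.ofReal (g i - a i) * ENNReal.ofReal (r 1 - b i) := by
    intro i
    show volume (Set.univ.pi ![Ioo (a i) (g i), Ioo (b i) (r 1)]) = _
    rw [volume_pi_pi]
    simp [Fin.prod_univ_two, Real.volume_Ioo]
  have hdisj : Pairwise (Function.onFun Disjoint B) := by
    intro i j hij
    rcases hij.lt_or_gt with hlt | hlt
    · rw [Function.onFun, Set.disjoint_left]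
      intro z hzi hzj
      rw [memB] at hzi hzj
      have hc : (i : ℕ) + 1 < p := lt_of_le_of_lt (Nat.succ_le_of_lt hlt) j.isLt
      have hgaj : g i ≤ a j := by
        simp only [g, dif_pos hc]
        exact h1 ⟨(i : ℕ) + 1, hc⟩ j (by simpa [Fin.le_def] using Nat.succ_le_of_lt hlt)
      exact lt_irrefl (z 0) (((hzi.1.2.trans_le hgaj).trans hzj.1.1))
    · rw [Function.onFun, Set.disjoint_left]
      intro z hzi hzj
      rw [memB] at hzi hzj
      have hc : (j : ℕ) + 1 < p := lt_of_le_of_lt (Nat.succ_le_of_lt hlt) i.isLt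
      have hgaj : g j ≤ a i := by
        simp only [g, dif_pos hc]
        exact h1 ⟨(j : ℕ) + 1, hc⟩ i (by simpa [Fin.le_def] using Nat.succ_le_of_lt hlt)
      exact lt_irrefl (z 0) (((hzj.1.2.trans_le hgaj).trans hzi.1.1))
  have key : volume {z : Fin 2 → ℝ | ∃ y ∈ Set.range s, ∀ j, f y j < z j ∧ z j < r j}
      = volume (⋃ i, B i) := by
    apply le_antisymm
    · have hsub : {z : Fin 2 → ℝ | ∃ y ∈ Set.range s, ∀ j, f y j < z j ∧ z j < r j}
          ⊆ (⋃ i, B i) ∪ (⋃ i, L i) := by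
        intro z hz
        obtain ⟨w, ⟨i, rfl⟩, hw⟩ := hz
        have h0 : a i < z 0 := (hw 0).1
        have h0r : z 0 < r 0 := (hw 0).2
        have hb1 : b i < z 1 := (hw 1).1
        have h1r : z 1 < r 1 := (hw 1).2
        have hTne : (Finset.univ.filter (fun j : Fin p => a j < z 0)).Nonempty :=
          ⟨i, by simp [h0]⟩
        set m := (Finset.univ.filter (fun j : Fin p => a j < z 0)).max' hTne with hm
        have hmmem : a m < z 0 := by
          have := Finset.max'_mem _ hTne
          simpa using this
        have him : i ≤ m := Finset.le_max' _ i (by simp [h0])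
        have hbm : b m < z 1 := lt_of_le_of_lt (h2 i m him) hb1
        by_cases hc : (m : ℕ) + 1 < p
        · have hzle : z 0 ≤ a ⟨(m : ℕ) + 1, hc⟩ := by
            by_contra hlt
            push_neg at hlt
            have hle : (⟨(m : ℕ) + 1, hc⟩ : Fin p) ≤ m :=
              Finset.le_max' _ _ (by simp [hlt])
            simp [Fin.le_def] at hle
          rcases lt_or_eq_of_le hzle with hlt | heq
          · refine Set.mem_union_left _ (Set.mem_iUnion.2 ⟨m, ?_⟩)
            rw [memB]
            refine ⟨⟨hmmem, ?_⟩, hbm, h1r⟩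
            simpa only [g, dif_pos hc] using hlt
          · refine Set.mem_union_right _ (Set.mem_iUnion.2 ⟨⟨(m : ℕ) + 1, hc⟩, ?_⟩)
            rw [memL]
            exact heq
        · refine Set.mem_union_left _ (Set.mem_iUnion.2 ⟨m, ?_⟩)
          rw [memB]
          refine ⟨⟨hmmem, ?_⟩, hbm, h1r⟩
          simpa only [g, dif_neg hc] using h0r
      calc volume {z : Fin 2 → ℝ | ∃ y ∈ Set.range s, ∀ j, f y j < z j ∧ z j < r j}
          ≤ volume ((⋃ i, B i) ∪ (⋃ i, L i)) := measure_mono hsub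
        _ ≤ volume (⋃ i, B i) + volume (⋃ i, L i) := measure_union_le _ _
        _ = volume (⋃ i, B i) := by
            rw [measure_iUnion_null hLnull, add_zero]
    · apply measure_mono
      rintro z hz
      obtain ⟨i, hzi⟩ := Set.mem_iUnion.1 hz
      rw [memB] at hzi
      refine ⟨s i, ⟨i, rfl⟩, ?_⟩
      intro j
      fin_cases j
      · exact ⟨hzi.1.1, hzi.1.2.trans_le (hgr i)⟩
      · exact ⟨hzi.2.1, hzi.2.2⟩
  rw [hv, key, measure_iUnion hdisj hmeas, tsum_fintype]
  simp only [volB]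
  rw [ENNReal.toReal_sum (by
    intro i _
    exact ENNReal.mul_ne_top ENNReal.ofReal_ne_top ENNReal.ofReal_ne_top)]
  refine Finset.sum_congr rfl ?_
  intro i _
  rw [ENNReal.toReal_mul, ENNReal.toReal_ofReal (sub_nonneg.2 (hga i)),
    ENNReal.toReal_ofReal (sub_nonneg.2 (hbr i).le)]
end

section
/- If s strictly dominates the reference point componentwise (f_j(s) < r_j for all j) and no element of S weakly dominates s, then HVI_r(s, S) > 0. -/
theorem hvi_pos {n k : ℕ} (f : (Fin n → ℝ) → Fin k → ℝ) (r : Fin k → ℝ)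
    (S : Set (Fin n → ℝ)) (hS : S.Finite) (s : Fin n → ℝ)
    (hr : ∀ j, f s j < r j) (hnd : ∀ y ∈ S, ∃ j, f s j < f y j) :
    0 < hv f r (S ∪ {s}) - hv f r S := by
  classical
  set box : (Fin n → ℝ) → Set (Fin k → ℝ) :=
    fun y => Set.pi Set.univ fun j => Set.Ioo (f y j) (r j) with hbox
  have hbox_eq : ∀ y, box y = {z : Fin k → ℝ | ∀ j, f y j < z j ∧ z j < r j} := by
    intro y
    ext z
    simp [hbox, Set.mem_pi, Set.mem_Ioo]
  have hbox_meas : ∀ y, MeasurableSet (box y) := by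
    intro y
    exact MeasurableSet.univ_pi fun j => measurableSet_Ioo
  have hbox_vol : ∀ y, MeasureTheory.volume (box y)
      = ∏ j, ENNReal.ofReal (r j - f y j) := by
    intro y
    rw [hbox]
    rw [MeasureTheory.volume_pi_pi]
    simp [Real.volume_Ioo]
  have hbox_fin : ∀ y, MeasureTheory.volume (box y) < ⊤ := by
    intro y
    rw [hbox_vol]
    exact ENNReal.prod_lt_top (fun j _ => ENNReal.ofReal_lt_top)
  set A := {z : Fin k → ℝ | ∃ y ∈ S, ∀ j, f y j < z j ∧ z j < r j} with hA
  set B := {z : Fin k → ℝ | ∃ y ∈ S ∪ {s}, ∀ j, f y j < z j ∧ z j < r j} with hB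
  have hAU : A = ⋃ y ∈ S, box y := by
    ext z
    simp [hA, hbox_eq]
  have hBU : B = A ∪ box s := by
    ext z
    simp only [hB, hA, hbox_eq, Set.mem_union, Set.mem_setOf_eq, Set.mem_singleton_iff]
    constructor
    · rintro ⟨y, hy | rfl, h⟩
      · exact Or.inl ⟨y, hy, h⟩
      · exact Or.inr h
    · rintro (⟨y, hy, h⟩ | h)
      · exact ⟨y, Or.inl hy, h⟩
      · exact ⟨s, Or.inr rfl, h⟩
  have hA_meas : MeasurableSet A := by
    rw [hAU]
    exact MeasurableSet.biUnion hS.countable (fun y _ => hbox_meas y)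
  have hA_fin : MeasureTheory.volume A < ⊤ := by
    rw [hAU]
    exact (MeasureTheory.measure_biUnion_lt_top hS (fun y _ => hbox_fin y))
  have hB_fin : MeasureTheory.volume B < ⊤ := by
    rw [hBU]
    exact lt_of_le_of_lt (MeasureTheory.measure_union_le _ _)
      (ENNReal.add_lt_top.2 ⟨hA_fin, hbox_fin s⟩)
  -- the small box
  set F := hS.toFinset with hF
  set T : Fin k → Finset ℝ := fun j =>
    insert (r j) ((F.image (fun y => f y j)).filter (fun t => f s j < t)) with hT
  have hTne : ∀ j, (T j).Nonempty := fun j => Finset.insert_nonempty _ _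
  set c : Fin k → ℝ := fun j => (T j).min' (hTne j) with hc
  have hc_gt : ∀ j, f s j < c j := by
    intro j
    rw [hc]
    rw [Finset.lt_min'_iff]
    intro t ht
    simp only [hT, Finset.mem_insert, Finset.mem_filter] at ht
    rcases ht with h | ⟨_, h⟩
    · rw [h]; exact hr j
    · exact h
  have hc_le_r : ∀ j, c j ≤ r j := by
    intro j
    exact Finset.min'_le _ _ (Finset.mem_insert_self _ _)
  have hc_le : ∀ y ∈ S, ∀ j, f s j < f y j → c j ≤ f y j := by
    intro y hy j hj
    apply Finset.min'_le
    simp only [hT, Finset.mem_insert, Finset.mem_filter, Finset.mem_image]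
    right
    exact ⟨⟨y, hS.mem_toFinset.2 hy, rfl⟩, hj⟩
  set D := Set.pi Set.univ (fun j => Set.Ioo (f s j) (c j)) with hD
  have hD_meas : MeasurableSet D := MeasurableSet.univ_pi fun j => measurableSet_Ioo
  have hD_pos : 0 < MeasureTheory.volume D := by
    rw [hD, MeasureTheory.volume_pi_pi]
    simp only [Real.volume_Ioo]
    rw [CanonicallyOrderedAdd.prod_pos]
    intro j _
    exact ENNReal.ofReal_pos.2 (sub_pos.2 (hc_gt j))
  have hD_sub : D ⊆ B := by
    intro z hz
    refine ⟨s, Or.inr rfl, fun j => ?_⟩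
    have := hz j (Set.mem_univ j)
    exact ⟨this.1, lt_of_lt_of_le this.2 (hc_le_r j)⟩
  have hDA : Disjoint D A := by
    rw [Set.disjoint_left]
    rintro z hz ⟨y, hy, hzy⟩
    obtain ⟨j, hj⟩ := hnd y hy
    have h1 := (hz j (Set.mem_univ j)).2
    have h2 := hc_le y hy j hj
    have h3 := (hzy j).1
    linarith
  have hAD_sub : A ∪ D ⊆ B := by
    rw [hBU]
    exact Set.union_subset (Set.subset_union_left)
      (fun z hz => Or.inr (fun j hj => by
        have := hz j hj
        exact ⟨this.1, lt_of_lt_of_le this.2 (hc_le_r j)⟩))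
  have hlt : MeasureTheory.volume A < MeasureTheory.volume B := by
    calc MeasureTheory.volume A
        < MeasureTheory.volume A + MeasureTheory.volume D := by
          exact ENNReal.lt_add_right hA_fin.ne hD_pos.ne'
      _ = MeasureTheory.volume (A ∪ D) := by
          rw [MeasureTheory.measure_union (hDA.symm) hD_meas]
      _ ≤ MeasureTheory.volume B := MeasureTheory.measure_mono hAD_sub
  have : (MeasureTheory.volume A).toReal < (MeasureTheory.volume B).toReal :=
    (ENNReal.toReal_lt_toReal hA_fin.ne hB_fin.ne).2 hlt
  simpa [hv, hA, hB, sub_pos] using this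
end

section
/- The UHVI fitness is continuous across the empirical non-dominated front in the bi-objective case: if z ∈ ℝ² lies on the boundary of the non-dominated region U_{S,r} (i.e., z is weakly but not strictly dominated by the set {f(s) : s ∈ S}), then both the hypervolume improvement of a point mapping to z and the distance d(z, ∂U_{S,r}) are zero. -/
/-- Hypervolume (in objective space, k = 2) of a set of objective vectors. -/
noncomputable def hvObj (r : Fin 2 → ℝ) (F : Set (Fin 2 → ℝ)) : ℝ :=
  (MeasureTheory.volume {w : Fin 2 → ℝ | ∃ u ∈ F, ∀ j, u j < w j ∧ w j < r j}).toReal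

/-- Continuity of the UHVI fitness across the empirical non-dominated front:
on the front both the hypervolume improvement and the distance vanish. -/
theorem uhvi_continuous_on_front {n : ℕ} (f : (Fin n → ℝ) → Fin 2 → ℝ)
    (r : Fin 2 → ℝ) (S : Set (Fin n → ℝ)) (hS : S.Finite)
    (z : Fin 2 → ℝ) (hz : ∀ j, z j < r j)
    (hweak : ∃ s ∈ S, ∀ j, f s j ≤ z j)
    (hnstrict : ∀ s ∈ S, ¬ (∀ j, f s j < z j)) :
    hvObj r (f '' S ∪ {z}) - hvObj r (f '' S) = 0 ∧
      Metric.infDist z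
        (frontier {w : Fin 2 → ℝ | (∀ j, w j < r j) ∧ ∀ s ∈ S, ¬ (∀ j, f s j < w j)}) = 0 := by
  obtain ⟨s, hsS, hle⟩ := hweak
  constructor
  · have hset : {w : Fin 2 → ℝ | ∃ u ∈ (f '' S ∪ {z}), ∀ j, u j < w j ∧ w j < r j}
        = {w : Fin 2 → ℝ | ∃ u ∈ f '' S, ∀ j, u j < w j ∧ w j < r j} := by
      ext w
      simp only [Set.mem_setOf_eq, Set.mem_union, Set.mem_singleton_iff]
      constructor
      · rintro ⟨u, hu | hu, hw⟩
        · exact ⟨u, hu, hw⟩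
        · subst hu
          exact ⟨f s, ⟨s, hsS, rfl⟩, fun j => ⟨lt_of_le_of_lt (hle j) (hw j).1, (hw j).2⟩⟩
      · rintro ⟨u, hu, hw⟩; exact ⟨u, Or.inl hu, hw⟩
    rw [hvObj, hvObj, hset, sub_self]
  · apply Metric.infDist_zero_of_mem
    rw [frontier_eq_closure_inter_closure]
    refine ⟨subset_closure ⟨hz, hnstrict⟩, ?_⟩
    rw [Metric.mem_closure_iff]
    intro ε hε
    refine ⟨fun j => z j + ε / 2, ?_, ?_⟩
    · intro hmem
      exact hmem.2 s hsS fun j => lt_of_le_of_lt (hle j) (by linarith)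
    · have : dist z (fun j => z j + ε / 2) ≤ ε / 2 := by
        rw [dist_pi_le_iff (by linarith)]
        intro i
        simp [Real.dist_eq, abs_of_nonneg, le_of_lt hε, abs_of_pos hε]
      linarith
end

section
/- In the bi-objective case, for a point z = f(s) that is strictly dominated by some element of the image f(S), the hypervolume improvement HVI_r(s, S) is zero while the Euclidean distance from z to the empirical non-dominated front ∂U_{S,r} is strictly positive (assuming z ≺ r componentwise strictly). -/
/-- For a strictly dominated point (below the reference point) the hypervolume
improvement is zero while the distance to the empirical non-dominated front is positive. -/
theorem hvi_zero_dist_pos_of_strictly_dominated {n : ℕ}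
    (f : (Fin n → ℝ) → Fin 2 → ℝ) (r : Fin 2 → ℝ)
    (S : Set (Fin n → ℝ)) (hS : S.Finite) (s : Fin n → ℝ)
    (hdom : ∃ y ∈ S, ∀ j, f y j < f s j) (hr : ∀ j, f s j < r j) :
    hv f r (S ∪ {s}) - hv f r S = 0 ∧
      0 < Metric.infDist (f s)
        (frontier {w : Fin 2 → ℝ | (∀ j, w j < r j) ∧ ∀ y ∈ S, ¬ (∀ j, f y j < w j)}) := by
  obtain ⟨y₀, hy₀S, hy₀⟩ := hdom
  constructor
  · have hset : {z : Fin 2 → ℝ | ∃ y ∈ S ∪ {s}, ∀ j, f y j < z j ∧ z j < r j}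
        = {z : Fin 2 → ℝ | ∃ y ∈ S, ∀ j, f y j < z j ∧ z j < r j} := by
      ext z
      constructor
      · rintro ⟨y, hy | hy, h⟩
        · exact ⟨y, hy, h⟩
        · rcases hy with rfl
          exact ⟨y₀, hy₀S, fun j => ⟨lt_trans (hy₀ j) (h j).1, (h j).2⟩⟩
      · rintro ⟨y, hy, h⟩
        exact ⟨y, Or.inl hy, h⟩
    unfold hv
    rw [hset, sub_self]
  · set U : Set (Fin 2 → ℝ) :=
      {w : Fin 2 → ℝ | (∀ j, w j < r j) ∧ ∀ y ∈ S, ¬ (∀ j, f y j < w j)} with hU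
    have hFne : hS.toFinset.Nonempty := ⟨y₀, hS.mem_toFinset.2 hy₀S⟩
    -- U is nonempty
    have hUne : U.Nonempty := by
      refine ⟨fun j => min (r j - 1) (hS.toFinset.inf' hFne (fun y => f y j)), ?_, ?_⟩
      · intro j
        calc min (r j - 1) (hS.toFinset.inf' hFne (fun y => f y j)) ≤ r j - 1 :=
              min_le_left _ _
          _ < r j := by linarith
      · intro y hy h
        have := h 0
        have h2 : hS.toFinset.inf' hFne (fun y => f y 0) ≤ f y 0 :=
          Finset.inf'_le _ (hS.mem_toFinset.2 hy)
        have h3 := min_le_right (r 0 - 1) (hS.toFinset.inf' hFne (fun y => f y 0))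
        linarith
    -- f s not in closure of U
    have hfs : f s ∉ closure U := by
      have hV : IsOpen {w : Fin 2 → ℝ | ∀ j, f y₀ j < w j} := by
        have : {w : Fin 2 → ℝ | ∀ j, f y₀ j < w j} = ⋂ j, {w | f y₀ j < w j} := by
          ext w; simp [Set.mem_iInter]
        rw [this]
        exact isOpen_iInter_of_finite fun j =>
          isOpen_lt continuous_const (continuous_apply j)
      have hdisj : U ⊆ {w : Fin 2 → ℝ | ∀ j, f y₀ j < w j}ᶜ := by
        intro w hw hmem
        exact hw.2 y₀ hy₀S hmem
      have hcl : closure U ⊆ {w : Fin 2 → ℝ | ∀ j, f y₀ j < w j}ᶜ :=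
        closure_minimal hdisj hV.isClosed_compl
      intro h
      exact hcl h hy₀
    -- U ≠ univ
    have hUne' : U ≠ Set.univ := by
      intro h
      exact hfs (h ▸ subset_closure (Set.mem_univ _))
    have hfrne : (frontier U).Nonempty :=
      nonempty_frontier_iff.2 ⟨hUne, hUne'⟩
    have hfs' : f s ∉ frontier U := fun h => hfs (frontier_subset_closure h)
    exact (isClosed_frontier.notMem_iff_infDist_pos hfrne).1 hfs'
end
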